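/- Consider the system on ℝ^6 (coordinates γ₁,γ₂,γ₃,p₁,p₂,p₃): γ̇ᵢ = (ε²/τ)pᵢ, ṗ₁ = (κ₁₂/τ)p₂ + μγ₁, ṗ₂ = -(κ₁₂/τ)p₁ + μγ₂, ṗ₃ = μγ₃, with μ = (κ₁₂/τ)(p₁γ₂ - p₂γ₁) - (ε²/τ)(p₁² + p₂² + p₃²). Then Φ = γ₁p₂ - γ₂p₁ + (κ₁₂/(2ε²))(γ₁² + γ₂²) is a first integral: dΦ/dt = 0 along any solution. -/

import Mathlib

/-- for the reduced three-dimensional Demchenko system without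
twisting, `Φ = γ₁p₂ - γ₂p₁ + (κ₁₂/(2ε²))(γ₁² + γ₂²)` is a first integral. -/
theorem demchenko3d_first_integral
    (ε τ κ₁₂ : ℝ) (hε : ε ≠ 0) (hτ : τ ≠ 0)
    (γ₁ γ₂ γ₃ p₁ p₂ p₃ : ℝ → ℝ)
    (μ : ℝ → ℝ)
    (hμ : ∀ t, μ t = (κ₁₂ / τ) * (p₁ t * γ₂ t - p₂ t * γ₁ t)
        - (ε^2 / τ) * (p₁ t ^ 2 + p₂ t ^ 2 + p₃ t ^ 2))
    (hγ₁ : ∀ t, HasDerivAt γ₁ ((ε^2 / τ) * p₁ t) t)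
    (hγ₂ : ∀ t, HasDerivAt γ₂ ((ε^2 / τ) * p₂ t) t)
    (hγ₃ : ∀ t, HasDerivAt γ₃ ((ε^2 / τ) * p₃ t) t)
    (hp₁ : ∀ t, HasDerivAt p₁ ((κ₁₂ / τ) * p₂ t + μ t * γ₁ t) t)
    (hp₂ : ∀ t, HasDerivAt p₂ (-(κ₁₂ / τ) * p₁ t + μ t * γ₂ t) t)
    (hp₃ : ∀ t, HasDerivAt p₃ (μ t * γ₃ t) t) (t : ℝ) :
    HasDerivAt (fun s => γ₁ s * p₂ s - γ₂ s * p₁ s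
      + (κ₁₂ / (2 * ε^2)) * (γ₁ s ^ 2 + γ₂ s ^ 2)) 0 t := by
  have h := (((hγ₁ t).mul (hp₂ t)).sub ((hγ₂ t).mul (hp₁ t))).add
    ((((hγ₁ t).pow 2).add ((hγ₂ t).pow 2)).const_mul (κ₁₂ / (2 * ε^2)))
  refine h.congr_deriv ?_
  rw [hμ t]
  field_simp
  ring
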